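/- Let $G$ be a finitely generated group with word metric $d$, let $G$ be amenable with a F\o lner sequence $S = (S_j)_{j\in\mathbb{N}}$, and let $c \in \ell^\infty(G)$. For $n \in \mathbb{N}$ set $\beta_c^S(n) = |\sum_{s\in S_n} c(s)|/|S_n|$ and $\sigma_S(n) = |\partial_1 S_n|/|S_n|$, where $\partial_r(A) = \{g \in G : 0 < d(g,A) \le r\}$. If $\lim_{n\to\infty} \sigma_S(n)/\beta_c^S(n) = 0$ (with $\beta_c^S(n) > 0$ eventually), then there do NOT exist constants $C, r \in \mathbb{N}_{>0}$ such that $|\sum_{s\in F} c(s)| \le C\cdot|\partial_r F|$ for all finite $F \subseteq G$. (By Whyte's criterion, this means $[c] \neq 0$ in $H_0^{uf}(G;\mathbb{R})$.) -/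
import Mathlib


/-- The word distance on a group `G` with respect to a generating set `Sg`:
`d(g,h)` is the minimal length of a word in `Sg ∪ Sg⁻¹` representing `g⁻¹h`. -/
noncomputable def wordDist {G : Type*} [Group G] (Sg : Set G) (g h : G) : ℕ :=
  sInf {n | ∃ w : List G, w.length = n ∧ (∀ x ∈ w, x ∈ Sg ∨ x⁻¹ ∈ Sg) ∧ w.prod = g⁻¹ * h}

/-- The closed ball of radius `r` around `g` in the word metric. -/
noncomputable def wball {G : Type*} [Group G] (Sg : Set G) (g : G) (r : ℕ) : Set G :=
  {x | wordDist Sg g x ≤ r}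

/-- The `r`-boundary `∂_r A = {g : 0 < d(g, A) ≤ r}` of a set `A`. -/
noncomputable def rBoundary {G : Type*} [Group G] (Sg : Set G) (r : ℕ) (A : Set G) : Set G :=
  {g | g ∉ A ∧ ∃ a ∈ A, wordDist Sg a g ≤ r}

/-- A Følner sequence: a sequence of nonempty finite subsets whose `r`-boundaries are
asymptotically negligible for every `r > 0`. -/
def IsFolner {G : Type*} [Group G] (Sg : Set G) (S : ℕ → Finset G) : Prop :=
  (∀ j, (S j).Nonempty) ∧ ∀ r : ℕ, 0 < r →
    Filter.Tendsto (fun j => ((rBoundary Sg r (S j : Set G)).ncard : ℝ) / (S j).card)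
      Filter.atTop (nhds 0)

/-- `c : G → ℝ` is a boundary in the degree-zero uniformly finite chain complex: there is
a bounded `1`-chain `b : G² → ℝ`, supported on pairs of uniformly bounded distance, with
`∂₁ b = c`, where `∂₁ b (x) = ∑_y b(y,x) - ∑_y b(x,y)`. -/
noncomputable def IsUFBoundary {G : Type*} [Group G] (Sg : Set G) (c : G → ℝ) : Prop :=
  ∃ b : G × G → ℝ,
    (∃ C : ℝ, ∀ p, |b p| ≤ C) ∧
    (∃ R : ℕ, ∀ p : G × G, R < wordDist Sg p.1 p.2 → b p = 0) ∧
    ∀ x : G, c x = (∑ᶠ y, b (y, x)) - (∑ᶠ y, b (x, y))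


open Pointwise

section Aux
variable {G : Type*} [Group G]

/-- Products of words of length at most `r` over `Sg ∪ Sg⁻¹`. -/
def Wset (Sg : Set G) (r : ℕ) : Set G :=
  {x | ∃ w : List G, w.length ≤ r ∧ (∀ y ∈ w, y ∈ Sg ∨ y⁻¹ ∈ Sg) ∧ w.prod = x}

lemma one_mem_Wset (Sg : Set G) (r : ℕ) : (1 : G) ∈ Wset Sg r :=
  ⟨[], by simp, by simp, by simp⟩

lemma Wset_finite {Sg : Set G} (hSg : Sg.Finite) (r : ℕ) : (Wset Sg r).Finite := by
  induction r with
  | zero =>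
    refine Set.Finite.subset (Set.finite_singleton 1) ?_
    rintro x ⟨w, hw, -, hp⟩
    have : w = [] := List.length_eq_zero_iff.mp (Nat.le_zero.mp hw)
    subst this
    simp at hp
    simp [hp.symm]
  | succ r ih =>
    have h2 : (Wset Sg (r+1)) ⊆ (Sg ∪ Sg⁻¹) * Wset Sg r ∪ Wset Sg r := by
      rintro x ⟨w, hw, hmem, hp⟩
      cases w with
      | nil => exact Or.inr (by simpa [← hp] using one_mem_Wset Sg r)
      | cons a t =>
        refine Or.inl ?_
        have ha : a ∈ Sg ∪ Sg⁻¹ := by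
          rcases hmem a (by simp) with h | h
          · exact Or.inl h
          · exact Or.inr (Set.mem_inv.mpr h)
        have ht : t.prod ∈ Wset Sg r := by
          refine ⟨t, by simpa using hw, fun y hy => hmem y (by simp [hy]), rfl⟩
        have : x = a * t.prod := by simp [← hp, List.prod_cons]
        rw [this]; exact Set.mul_mem_mul ha ht
    exact Set.Finite.subset (((hSg.union hSg.inv).mul ih).union ih) h2

lemma wordDist_nonempty {Sg : Set G} (hgen : Subgroup.closure Sg = ⊤) (g h : G) :
    {n | ∃ w : List G, w.length = n ∧ (∀ x ∈ w, x ∈ Sg ∨ x⁻¹ ∈ Sg) ∧ w.prod = g⁻¹ * h}.Nonempty := by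
  have hm : g⁻¹ * h ∈ (Subgroup.closure Sg).toSubmonoid := by rw [hgen]; trivial
  rw [Subgroup.closure_toSubmonoid] at hm
  obtain ⟨l, hl, hp⟩ := Submonoid.exists_list_of_mem_closure hm
  refine ⟨l.length, l, rfl, fun x hx => ?_, hp⟩
  rcases hl x hx with h | h
  · exact Or.inl h
  · exact Or.inr (Set.mem_inv.mp h)

lemma exists_word_of_wordDist {Sg : Set G} (hgen : Subgroup.closure Sg = ⊤) (g h : G) :
    ∃ w : List G, w.length = wordDist Sg g h ∧ (∀ x ∈ w, x ∈ Sg ∨ x⁻¹ ∈ Sg) ∧ w.prod = g⁻¹ * h :=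
  Nat.sInf_mem (wordDist_nonempty hgen g h)

lemma rBoundary_subset_mul_Wset {Sg : Set G} (hgen : Subgroup.closure Sg = ⊤)
    {A : Set G} {r : ℕ} :
    rBoundary Sg r A ⊆ (rBoundary Sg 1 A) * Wset Sg r := by
  rintro g ⟨hgA, a, haA, hd⟩
  obtain ⟨w, hlen, hmem, hprod⟩ := exists_word_of_wordDist hgen a g
  have hkr : w.length ≤ r := hlen ▸ hd
  have hgw : a * w.prod = g := by rw [hprod]; group
  suffices H : ∀ j i, i + j = w.length → a * (w.take i).prod ∈ A →
      g ∈ (rBoundary Sg 1 A) * Wset Sg r by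
    exact H w.length 0 (by simp) (by simpa using haA)
  intro j
  induction j with
  | zero =>
    intro i hi hA
    exfalso
    apply hgA
    have : i = w.length := by omega
    rw [this, List.take_length, hgw] at hA
    exact hA
  | succ j ih =>
    intro i hi hA
    by_cases hA1 : a * (w.take (i+1)).prod ∈ A
    · exact ih (i+1) (by omega) hA1
    · have hi_lt : i < w.length := by omega
      have htake : (w.take (i+1)).prod = (w.take i).prod * w[i] :=
        List.prod_take_succ w i hi_lt
      have hw1 : wordDist Sg (a * (w.take i).prod) (a * (w.take (i+1)).prod) ≤ 1 := by
        apply Nat.sInf_le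
        refine ⟨[w[i]], rfl, ?_, ?_⟩
        · intro x hx
          simp only [List.mem_singleton] at hx
          exact hx ▸ hmem _ (List.getElem_mem hi_lt)
        · simp [htake, mul_assoc]
      have hbd : a * (w.take (i+1)).prod ∈ rBoundary Sg 1 A :=
        ⟨hA1, _, hA, hw1⟩
      have hdropmem : (w.drop (i+1)).prod ∈ Wset Sg r := by
        refine ⟨w.drop (i+1), by simp; omega, fun x hx => hmem x (List.mem_of_mem_drop hx), rfl⟩
      have hg : g = (a * (w.take (i+1)).prod) * (w.drop (i+1)).prod := by
        rw [mul_assoc, List.prod_take_mul_prod_drop, hgw]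
      rw [hg]
      exact Set.mul_mem_mul hbd hdropmem

lemma rBoundary_subset_A_mul {Sg : Set G} (hgen : Subgroup.closure Sg = ⊤)
    {A : Set G} {r : ℕ} :
    rBoundary Sg r A ⊆ A * Wset Sg r := by
  rintro g ⟨hgA, a, haA, hd⟩
  obtain ⟨w, hlen, hmem, hprod⟩ := exists_word_of_wordDist hgen a g
  have hgw : a * w.prod = g := by rw [hprod]; group
  rw [← hgw]
  exact Set.mul_mem_mul haA ⟨w, hlen ▸ hd, hmem, rfl⟩

lemma ncard_mul_le {s t : Set G} (hs : s.Finite) (ht : t.Finite) :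
    (s * t).ncard ≤ s.ncard * t.ncard := by
  classical
  have h1 : s * t = ↑(hs.toFinset * ht.toFinset) := by
    ext x
    simp [Set.mem_mul, Finset.mem_mul]
  rw [h1, Set.ncard_coe_finset, Set.ncard_eq_toFinset_card s hs, Set.ncard_eq_toFinset_card t ht]
  exact Finset.card_mul_le

end Aux

/-- Let `G` be a finitely generated amenable group with Følner sequence
`S`, and `c ∈ ℓ∞(G)`. If `σ_S(n)/β_c^S(n) → 0` (with `β_c^S` eventually positive), then
Whyte's boundedness condition fails for `c`; by Whyte's criterion, `[c] ≠ 0` in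
`H₀^{uf}(G;ℝ)`. -/
theorem nonvanishing_of_dominating_folner_ratio {G : Type*} [Group G]
    (Sg : Finset G) (hgen : Subgroup.closure (Sg : Set G) = ⊤)
    (S : ℕ → Finset G) (hS : IsFolner (Sg : Set G) S)
    (c : G → ℝ) (hc : ∃ C : ℝ, ∀ g, |c g| ≤ C)
    (β : ℕ → ℝ) (hβ : ∀ n, β n = |∑ s ∈ S n, c s| / (S n).card)
    (σ : ℕ → ℝ)
    (hσ : ∀ n, σ n = ((rBoundary (Sg : Set G) 1 (S n : Set G)).ncard : ℝ) / (S n).card)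
    (hpos : ∀ᶠ n in Filter.atTop, 0 < β n)
    (hdom : Filter.Tendsto (fun n => σ n / β n) Filter.atTop (nhds 0)) :
    ¬ ∃ C r : ℕ, 0 < C ∧ 0 < r ∧ ∀ F : Finset G,
        |∑ s ∈ F, c s| ≤ (C : ℝ) * ((rBoundary (Sg : Set G) r (F : Set G)).ncard : ℝ) := by
  rintro ⟨C, r, hC, hr, hbound⟩
  have hSgfin : (Sg : Set G).Finite := Sg.finite_toSet
  set W := Wset (Sg : Set G) r with hW
  have hWfin : W.Finite := Wset_finite hSgfin r
  have hKnat : 0 < W.ncard := (Set.ncard_pos hWfin).mpr ⟨1, one_mem_Wset _ _⟩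
  set K : ℝ := (W.ncard : ℝ) with hKdef
  have hKpos : (0:ℝ) < K := Nat.cast_pos.mpr hKnat
  have hCpos : (0:ℝ) < (C:ℝ) := by exact_mod_cast hC
  have hCK : (0:ℝ) < (C:ℝ) * K := mul_pos hCpos hKpos
  have hkey : ∀ n, β n ≤ ((C:ℝ) * K) * σ n := by
    intro n
    have hcard : (0:ℝ) < ((S n).card : ℝ) := by exact_mod_cast (hS.1 n).card_pos
    have h1fin : (rBoundary (↑Sg) 1 ((S n) : Set G)).Finite :=
      Set.Finite.subset (((S n).finite_toSet).mul (Wset_finite hSgfin 1))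
        (rBoundary_subset_A_mul hgen)
    have hrn : (rBoundary (↑Sg) r ((S n) : Set G)).ncard ≤
        (rBoundary (↑Sg) 1 ((S n) : Set G)).ncard * W.ncard :=
      le_trans (Set.ncard_le_ncard (rBoundary_subset_mul_Wset hgen) (h1fin.mul hWfin))
        (ncard_mul_le h1fin hWfin)
    have h2 : ((rBoundary (↑Sg) r ((S n) : Set G)).ncard : ℝ) ≤
        ((rBoundary (↑Sg) 1 ((S n) : Set G)).ncard : ℝ) * K := by
      rw [hKdef]; exact_mod_cast hrn
    have h3 : |∑ s ∈ S n, c s| ≤ (C:ℝ) * K * ((rBoundary (↑Sg) 1 ((S n) : Set G)).ncard : ℝ) := by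
      calc |∑ s ∈ S n, c s| ≤ (C:ℝ) * ((rBoundary (↑Sg) r ((S n) : Set G)).ncard : ℝ) :=
            hbound (S n)
        _ ≤ (C:ℝ) * (((rBoundary (↑Sg) 1 ((S n) : Set G)).ncard : ℝ) * K) :=
            mul_le_mul_of_nonneg_left h2 hCpos.le
        _ = (C:ℝ) * K * ((rBoundary (↑Sg) 1 ((S n) : Set G)).ncard : ℝ) := by ring
    rw [hβ n, hσ n, mul_div_assoc', mul_comm ((C:ℝ)*K)]
    refine (div_le_div_iff_of_pos_right hcard).mpr ?_
    linarith [h3, mul_comm ((C:ℝ)*K) ((rBoundary (↑Sg) 1 ((S n) : Set G)).ncard : ℝ)]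
  have hεpos : (0:ℝ) < 1/((C:ℝ)*K) := by positivity
  have h4 : ∀ᶠ n in Filter.atTop, |σ n / β n| < 1/((C:ℝ)*K) := by
    have := hdom.eventually (eventually_abs_sub_lt 0 hεpos)
    simpa using this
  obtain ⟨n, hb, habs⟩ := (hpos.and h4).exists
  have h5 : 1/((C:ℝ)*K) ≤ σ n / β n := by
    rw [div_le_div_iff₀ hCK hb]
    nlinarith [hkey n]
  exact absurd (le_trans h5 (le_abs_self _)) (not_le.mpr habs)
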